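/- Let S be a nonempty set and K : S × S → ℂ a conditionally positive definite kernel. Then there exist a complex Hilbert space F, a map V : S → F and a map h : S → ℂ such that K(s,t) = 2⟨V(s), V(t)⟩ − ⟨V(s), V(s)⟩ − ⟨V(t), V(t)⟩ − h(s) − conj(h(t)) for all s,t ∈ S (Kolmogorov-type decomposition, scalar case). -/

import Mathlib

open scoped ComplexOrder
open Complex

/-- A scalar kernel `K` is conditionally positive definite if it is hermitian and for every
`n ≥ 2`, all `s₁, …, sₙ ∈ S` and all `c₁, …, cₙ ∈ ℂ` with `∑ᵢ cᵢ = 0`, the number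
`∑ᵢⱼ conj(cᵢ) cⱼ K(sᵢ, sⱼ)` is real and nonnegative (here expressed via the order on `ℂ`). -/
def IsCondPosDefKernelC {S : Type*} (K : S → S → ℂ) : Prop :=
  ∀ (n : ℕ), 2 ≤ n → ∀ (s : Fin n → S) (c : Fin n → ℂ), (∑ i, c i) = 0 →
    0 ≤ ∑ i, ∑ j, (starRingEnd ℂ) (c i) * c j * K (s i) (s j)

namespace CPDaux

noncomputable section

variable {S : Type*}

/-- The semi-inner product on finitely supported functions induced by a kernel `M`. -/
def kinner (M : S → S → ℂ) (f g : S →₀ ℂ) : ℂ :=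
  f.sum fun s a => g.sum fun t b => (starRingEnd ℂ) a * b * M s t

theorem kinner_single (M : S → S → ℂ) (s t : S) (a b : ℂ) :
    kinner M (Finsupp.single s a) (Finsupp.single t b) = (starRingEnd ℂ) a * b * M s t := by
  unfold kinner
  rw [Finsupp.sum_single_index (by simp), Finsupp.sum_single_index (by simp)]

theorem kinner_conj_symm (M : S → S → ℂ) (hM : ∀ s t, (starRingEnd ℂ) (M s t) = M t s)
    (f g : S →₀ ℂ) : (starRingEnd ℂ) (kinner M g f) = kinner M f g := by
  simp only [kinner, Finsupp.sum, map_sum, map_mul, Complex.conj_conj, hM]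
  rw [Finset.sum_comm]
  exact Finset.sum_congr rfl fun t _ => Finset.sum_congr rfl fun s _ => by ring

theorem kinner_add_left (M : S → S → ℂ) (x y z : S →₀ ℂ) :
    kinner M (x + y) z = kinner M x z + kinner M y z := by
  unfold kinner
  exact Finsupp.sum_add_index' (fun s => by simp)
    (fun s a₁ a₂ => by simp only [map_add, add_mul]; exact Finsupp.sum_add)

theorem kinner_smul_left (M : S → S → ℂ) (x y : S →₀ ℂ) (r : ℂ) :
    kinner M (r • x) y = (starRingEnd ℂ) r * kinner M x y := by
  unfold kinner
  rw [Finsupp.sum_smul_index' (fun s => by simp), Finsupp.mul_sum]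
  refine Finsupp.sum_congr fun s _ => ?_
  rw [Finsupp.mul_sum]
  refine Finsupp.sum_congr fun t _ => ?_
  simp only [smul_eq_mul, map_mul]
  ring

theorem kinner_self_nonneg (M : S → S → ℂ)
    (hpos : ∀ (n : ℕ) (s : Fin n → S) (c : Fin n → ℂ),
      0 ≤ ∑ i, ∑ j, (starRingEnd ℂ) (c i) * c j * M (s i) (s j))
    (f : S →₀ ℂ) : 0 ≤ kinner M f f := by
  classical
  set n := Fintype.card ↥f.support with hn
  set e : ↥f.support ≃ Fin n := Fintype.equivFin ↥f.support with he
  have key : kinner M f f =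
      ∑ i : Fin n, ∑ j : Fin n,
        (starRingEnd ℂ) (f ↑(e.symm i)) * f ↑(e.symm j) * M ↑(e.symm i) ↑(e.symm j) := by
    simp only [kinner, Finsupp.sum]
    rw [← Finset.sum_coe_sort f.support
      (fun x => ∑ t ∈ f.support, (starRingEnd ℂ) (f x) * f t * M x t)]
    rw [← Equiv.sum_comp e.symm
      (fun x : ↥f.support => ∑ t ∈ f.support, (starRingEnd ℂ) (f ↑x) * f t * M (↑x) t)]
    refine Finset.sum_congr rfl fun i _ => ?_
    rw [← Finset.sum_coe_sort f.support
      (fun t => (starRingEnd ℂ) (f ↑(e.symm i)) * f t * M (↑(e.symm i)) t)]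
    rw [← Equiv.sum_comp e.symm
      (fun y : ↥f.support => (starRingEnd ℂ) (f ↑(e.symm i)) * f ↑y * M (↑(e.symm i)) ↑y)]
  rw [key]
  exact hpos n (fun i => ↑(e.symm i)) (fun i => f ↑(e.symm i))

end

end CPDaux

/-- Kolmogorov-type decomposition for scalar conditionally positive definite kernels:
`K(s,t) = 2⟨V(s), V(t)⟩ − ⟨V(s), V(s)⟩ − ⟨V(t), V(t)⟩ − h(s) − conj(h(t))` for a map `V`
into some complex Hilbert space `F` and some `h : S → ℂ`. -/
theorem condPosDef_kolmogorov_decomposition {S : Type u} [Nonempty S] (K : S → S → ℂ)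
    (hK : ∀ s t, K t s = (starRingEnd ℂ) (K s t)) (hKcpd : IsCondPosDefKernelC K) :
    ∃ (F : Type u) (_ : NormedAddCommGroup F) (_ : InnerProductSpace ℂ F)
      (_ : CompleteSpace F) (V : S → F) (h : S → ℂ),
      ∀ s t, K s t = 2 * (inner ℂ (V s) (V t) : ℂ) - (inner ℂ (V s) (V s) : ℂ)
        - (inner ℂ (V t) (V t) : ℂ) - h s - (starRingEnd ℂ) (h t) := by
  classical
  obtain ⟨s₀⟩ := ‹Nonempty S›
  have hconj : ∀ s t, (starRingEnd ℂ) (K s t) = K t s := fun s t => (hK s t).symm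
  set M : S → S → ℂ := fun s t => (K s t - K s s₀ - K s₀ t + K s₀ s₀) / 2 with hM
  have hMherm : ∀ s t, (starRingEnd ℂ) (M s t) = M t s := by
    intro s t
    simp only [hM, map_div₀, map_sub, map_add, hconj, map_ofNat]
    ring
  -- positivity of M
  have hMpos : ∀ (n : ℕ) (s : Fin n → S) (c : Fin n → ℂ),
      0 ≤ ∑ i, ∑ j, (starRingEnd ℂ) (c i) * c j * M (s i) (s j) := by
    intro n s c
    rcases Nat.eq_zero_or_pos n with hn | hn
    · subst hn; simp
    have h2 : 2 ≤ n + 1 := by omega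
    set cT : ℂ := ∑ i, c i with hT
    set SS : ℂ := ∑ i, ∑ j, (starRingEnd ℂ) (c i) * c j * K (s i) (s j) with hSS
    set P : ℂ := ∑ i, (starRingEnd ℂ) (c i) * K (s i) s₀ with hP
    set Q : ℂ := ∑ j, c j * K s₀ (s j) with hQ
    have hsum : (∑ i, (Fin.cons (-cT) c : Fin (n + 1) → ℂ) i) = 0 := by
      rw [Fin.sum_cons, ← hT]; ring
    have hbig := hKcpd (n + 1) h2 (Fin.cons s₀ s) (Fin.cons (-cT) c) hsum
    have eQ : ∀ a : ℂ, (∑ j, a * c j * K s₀ (s j)) = a * Q := by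
      intro a
      rw [hQ, Finset.mul_sum]
      exact Finset.sum_congr rfl fun j _ => by ring
    have eP : ∀ b : ℂ, (∑ i, (starRingEnd ℂ) (c i) * b * K (s i) s₀) = b * P := by
      intro b
      rw [hP, Finset.mul_sum]
      exact Finset.sum_congr rfl fun i _ => by ring
    have hLHS : (∑ i, ∑ j, (starRingEnd ℂ) ((Fin.cons (-cT) c : Fin (n + 1) → ℂ) i)
          * (Fin.cons (-cT) c : Fin (n + 1) → ℂ) j
          * K ((Fin.cons s₀ s : Fin (n + 1) → S) i) ((Fin.cons s₀ s : Fin (n + 1) → S) j))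
        = SS - cT * P - (starRingEnd ℂ) cT * Q
          + (starRingEnd ℂ) cT * cT * K s₀ s₀ := by
      simp only [Fin.sum_univ_succ, Fin.cons_zero, Fin.cons_succ, map_neg]
      rw [eQ, Finset.sum_add_distrib, eP, ← hSS]
      ring
    rw [hLHS] at hbig
    have hRHS : (∑ i, ∑ j, (starRingEnd ℂ) (c i) * c j * M (s i) (s j))
        = (SS - cT * P - (starRingEnd ℂ) cT * Q
            + (starRingEnd ℂ) cT * cT * K s₀ s₀) / 2 := by
      have step : ∀ i, (∑ j, (starRingEnd ℂ) (c i) * c j * M (s i) (s j))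
          = ((∑ j, (starRingEnd ℂ) (c i) * c j * K (s i) (s j))
              - ((starRingEnd ℂ) (c i) * K (s i) s₀) * cT
              - (starRingEnd ℂ) (c i) * Q
              + (starRingEnd ℂ) (c i) * (cT * K s₀ s₀)) / 2 := by
        intro i
        have expand : ∀ j, (starRingEnd ℂ) (c i) * c j * M (s i) (s j)
            = ((starRingEnd ℂ) (c i) * c j * K (s i) (s j)
                - ((starRingEnd ℂ) (c i) * K (s i) s₀) * c j
                - (starRingEnd ℂ) (c i) * (c j * K s₀ (s j))
                + (starRingEnd ℂ) (c i) * (c j * K s₀ s₀)) / 2 := by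
          intro j
          simp only [hM]
          ring
        rw [Finset.sum_congr rfl fun j _ => expand j, ← Finset.sum_div]
        congr 1
        have g1 : (∑ x, (starRingEnd ℂ) (c i) * K (s i) s₀ * c x)
            = (starRingEnd ℂ) (c i) * K (s i) s₀ * cT := by
          rw [hT, Finset.mul_sum]
        have g2 : (∑ x, (starRingEnd ℂ) (c i) * (c x * K s₀ (s x)))
            = (starRingEnd ℂ) (c i) * Q := by
          rw [hQ, Finset.mul_sum]
        have g3 : (∑ x, (starRingEnd ℂ) (c i) * (c x * K s₀ s₀))
            = (starRingEnd ℂ) (c i) * (cT * K s₀ s₀) := by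
          rw [hT, Finset.sum_mul, Finset.mul_sum]
        rw [Finset.sum_add_distrib, Finset.sum_sub_distrib, Finset.sum_sub_distrib, g1, g2, g3]
      rw [Finset.sum_congr rfl fun i _ => step i, ← Finset.sum_div]
      congr 1
      have hconjT : (∑ i, (starRingEnd ℂ) (c i)) = (starRingEnd ℂ) cT := by
        rw [hT, map_sum]
      have G1 : (∑ i, (starRingEnd ℂ) (c i) * K (s i) s₀ * cT) = P * cT := by
        rw [hP, Finset.sum_mul]
      have G2 : (∑ i, (starRingEnd ℂ) (c i) * Q) = (starRingEnd ℂ) cT * Q := by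
        rw [← hconjT, Finset.sum_mul]
      have G3 : (∑ i, (starRingEnd ℂ) (c i) * (cT * K s₀ s₀))
          = (starRingEnd ℂ) cT * (cT * K s₀ s₀) := by
        rw [← hconjT, Finset.sum_mul]
        exact (Finset.sum_mul _ _ _).symm
      rw [Finset.sum_add_distrib, Finset.sum_sub_distrib, Finset.sum_sub_distrib,
        G1, G2, G3, ← hSS]
      ring
    rw [hRHS]
    have h2inv : (0 : ℂ) ≤ 2⁻¹ := by
      rw [show (2⁻¹ : ℂ) = ((2⁻¹ : ℝ) : ℂ) by norm_num, Complex.zero_le_real]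
      norm_num
    rw [div_eq_mul_inv, mul_comm]
    exact mul_nonneg h2inv hbig
  -- build the pre-inner-product space on finitely supported functions
  letI core : PreInnerProductSpace.Core ℂ (S →₀ ℂ) :=
    { inner := CPDaux.kinner M
      conj_inner_symm := CPDaux.kinner_conj_symm M hMherm
      re_inner_nonneg := fun f => by
        have h0 := CPDaux.kinner_self_nonneg M hMpos f
        rw [Complex.le_def] at h0
        simpa [RCLike.re_to_complex] using h0.1
      add_left := CPDaux.kinner_add_left M
      smul_left := CPDaux.kinner_smul_left M }
  letI sg : SeminormedAddCommGroup (S →₀ ℂ) :=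
    InnerProductSpace.Core.toSeminormedAddCommGroup (𝕜 := ℂ) (F := S →₀ ℂ)
  letI ns : NormedSpace ℂ (S →₀ ℂ) :=
    InnerProductSpace.Core.toNormedSpace (𝕜 := ℂ) (F := S →₀ ℂ)
  letI ips : InnerProductSpace ℂ (S →₀ ℂ) :=
    { ns, core.toInner with
      norm_sq_eq_re_inner := fun x => Real.sq_sqrt (core.re_inner_nonneg x)
      conj_inner_symm := core.conj_inner_symm
      add_left := core.add_left
      smul_left := core.smul_left }
  -- the Hilbert space is the completion
  refine ⟨UniformSpace.Completion (S →₀ ℂ), inferInstance, inferInstance, inferInstance,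
    fun s => ((Finsupp.single s (1 : ℂ) : S →₀ ℂ) : UniformSpace.Completion (S →₀ ℂ)),
    fun s => -(M s s) - K s s₀ + K s₀ s₀ / 2, ?_⟩
  intro s t
  have hinner : ∀ a b : S,
      (inner ℂ ((Finsupp.single a (1 : ℂ) : S →₀ ℂ) : UniformSpace.Completion (S →₀ ℂ))
        ((Finsupp.single b (1 : ℂ) : S →₀ ℂ) : UniformSpace.Completion (S →₀ ℂ)) : ℂ)
        = M a b := by
    intro a b
    rw [UniformSpace.Completion.inner_coe]
    have : (inner ℂ (Finsupp.single a (1 : ℂ)) (Finsupp.single b (1 : ℂ)) : ℂ)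
        = CPDaux.kinner M (Finsupp.single a 1) (Finsupp.single b 1) := rfl
    rw [this, CPDaux.kinner_single]
    simp
  rw [hinner s t, hinner s s, hinner t t]
  have hMss : (starRingEnd ℂ) (M t t) = M t t := hMherm t t
  simp only [map_sub, map_add, map_neg, map_div₀, hMss, hconj, Complex.conj_ofNat]
  simp only [hM]
  ring
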